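/- Suppose κ ≥ 2ℓ_g. Let τ > 0, let s ≥ 1 be an integer, let U^1, …, U^{s+1} ∈ V be stage values, and let D_{kℓ} : V → V (for 1 ≤ ℓ ≤ k ≤ s) be linear maps such that the differential form of the explicit exponential Runge–Kutta method holds: ∑_{ℓ=1}^{k} D_{kℓ}(U^{ℓ+1} − U^{ℓ}) = τ·g_κ(U^{k}) − (τ/2)·L_κ(U^{k+1} + U^{k}) for every 1 ≤ k ≤ s. Then for every 1 ≤ j ≤ s the stage energy dissipation law holds: E[U^{j+1}] − E[U^{1}] ≤ −(1/τ)·∑_{k=1}^{j} ⟨U^{k+1} − U^{k}, ∑_{ℓ=1}^{k} D_{kℓ}(U^{ℓ+1} − U^{ℓ})⟩. In particular, if in addition the quadratic form (v_1, …, v_s) ↦ ∑_{k=1}^{s} ⟨v_k, ∑_{ℓ=1}^{k} D_{kℓ}(v_ℓ)⟩ is nonnegative (i.e. the associated differentiation matrix of operators has positive semidefinite symmetric part), then E[U^{s+1}] ≤ E[U^{1}]. -/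

import Mathlib

open scoped RealInnerProductSpace NNReal
open Finset

section Aux
set_option linter.unusedSectionVars false
variable {V : Type*} [NormedAddCommGroup V] [InnerProductSpace ℝ V] [CompleteSpace V]

lemma stmt_0_descent
    (G : V → ℝ) (gradG : V → V)
    (hG : ∀ x, HasGradientAt G (gradG x) x)
    (ℓ : ℝ≥0) (hLip : LipschitzWith ℓ gradG) (x y : V) :
    G y - G x ≤ ⟪gradG x, y - x⟫ + (ℓ : ℝ) * ‖y - x‖ ^ 2 := by
  set d := y - x with hd
  set f : ℝ → ℝ := fun t => G (x + t • d) with hf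
  set f' : ℝ → ℝ := fun t => ⟪gradG (x + t • d), d⟫ with hf'
  have hder : ∀ t : ℝ, HasDerivAt f (f' t) t := by
    intro t
    have hline : HasDerivAt (fun t : ℝ => x + t • d) d t := by
      simpa using ((hasDerivAt_id t).smul_const d).const_add x
    have := ((hG (x + t • d)).hasFDerivAt).comp_hasDerivAt t hline
    simpa [f, f', InnerProductSpace.toDual_apply_apply, Function.comp_def] using this
  obtain ⟨c, hc, hceq⟩ := exists_hasDerivAt_eq_slope f f' one_pos
    (fun t _ => (hder t).continuousAt.continuousWithinAt)
    (fun t _ => hder t)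
  have hfy : f 1 = G y := by simp [f, hd]
  have hfx : f 0 = G x := by simp [f]
  have heq : G y - G x = f' c := by
    rw [hceq]; rw [hfy, hfx]; ring
  rw [heq]
  have hsplit : f' c = ⟪gradG x, d⟫ + ⟪gradG (x + c • d) - gradG x, d⟫ := by
    simp [f', inner_sub_left]
  rw [hsplit]
  have h1 : ⟪gradG (x + c • d) - gradG x, d⟫ ≤ ‖gradG (x + c • d) - gradG x‖ * ‖d‖ :=
    real_inner_le_norm _ _
  have h2 : ‖gradG (x + c • d) - gradG x‖ ≤ (ℓ : ℝ) * ‖d‖ := by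
    have := hLip.dist_le_mul (x + c • d) x
    simp only [dist_eq_norm] at this
    calc ‖gradG (x + c • d) - gradG x‖ ≤ (ℓ : ℝ) * ‖x + c • d - x‖ := this
      _ = (ℓ : ℝ) * (|c| * ‖d‖) := by simp [norm_smul]
      _ ≤ (ℓ : ℝ) * (1 * ‖d‖) := by
          gcongr
          rw [abs_of_pos hc.1]; exact hc.2.le
      _ = (ℓ : ℝ) * ‖d‖ := by ring
  nlinarith [norm_nonneg d, norm_nonneg (gradG (x + c • d) - gradG x), ℓ.coe_nonneg]

lemma stmt_0_perstep
    (L : V →ₗ[ℝ] V)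
    (hLsymm : ∀ x y : V, ⟪L x, y⟫ = ⟪x, L y⟫)
    (G : V → ℝ) (gradG : V → V)
    (ℓ : ℝ≥0)
    (hdesc : ∀ x y : V, G y - G x ≤ ⟪gradG x, y - x⟫ + (ℓ : ℝ) * ‖y - x‖ ^ 2)
    (κ : ℝ) (hκ : 2 * (ℓ : ℝ) ≤ κ)
    (E : V → ℝ) (hE : ∀ v, E v = (1/2) * ⟪v, L v⟫ + G v)
    (Lκ : V → V) (hLκ : ∀ v, Lκ v = L v + κ • v)
    (gκ : V → V) (hgκ : ∀ v, gκ v = -gradG v + κ • v)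
    (τ : ℝ) (hτ : 0 < τ)
    (u u' : V) (S : V)
    (hS : S = τ • gκ u - (τ / 2) • Lκ (u' + u)) :
    E u' - E u ≤ -(1 / τ) * ⟪u' - u, S⟫ := by
  set d := u' - u with hd
  have hdd : ⟪d, d⟫ = ⟪d, u'⟫ - ⟪d, u⟫ := by
    rw [hd]; rw [inner_sub_right]
  have hval : ⟪d, S⟫ = τ * (-⟪gradG u, d⟫ - (1/2) * ⟪d, L (u' + u)⟫ - (κ/2) * ⟪d, d⟫) := by
    rw [hS, hgκ, hLκ]
    rw [inner_sub_right, real_inner_smul_right, real_inner_smul_right,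
      inner_add_right, inner_add_right, real_inner_smul_right, real_inner_smul_right,
      inner_neg_right, real_inner_comm d (gradG u), hdd]
    rw [show ((u' + u : V)) = u' + u from rfl]
    rw [inner_add_right (𝕜 := ℝ) d u' u]
    ring
  have hquad : ⟪u', L u'⟫ - ⟪u, L u⟫ = ⟪d, L (u' + u)⟫ := by
    rw [hd, inner_sub_left, map_add, inner_add_right, inner_add_right]
    have h1 : ⟪u', L u⟫ = ⟪u, L u'⟫ := by
      rw [real_inner_comm]; exact hLsymm u u'
    linarith [h1]
  have hG' : G u' - G u ≤ ⟪gradG u, d⟫ + (κ/2) * ⟪d, d⟫ := by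
    have h1 := hdesc u u'
    have h2 : ⟪d, d⟫ = ‖d‖ ^ 2 := real_inner_self_eq_norm_sq d
    have h3 : (ℓ : ℝ) * ‖d‖ ^ 2 ≤ (κ/2) * ‖d‖ ^ 2 := by
      apply mul_le_mul_of_nonneg_right _ (sq_nonneg _); linarith
    rw [h2]; rw [← hd] at h1; linarith
  have hEdiff : E u' - E u = (1/2) * ⟪d, L (u' + u)⟫ + (G u' - G u) := by
    rw [hE, hE]; linarith [hquad]
  have hfinal : -(1 / τ) * ⟪d, S⟫
      = ⟪gradG u, d⟫ + (1/2) * ⟪d, L (u' + u)⟫ + (κ/2) * ⟪d, d⟫ := by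
    rw [hval]; field_simp; ring
  rw [hfinal, hEdiff]; linarith

end Aux

/-- Stage energy dissipation law for the differential form of an explicit
exponential Runge–Kutta method, and unconditional energy decay when the
associated differentiation quadratic form is positive semidefinite. -/
theorem stmt_0
    {V : Type*} [NormedAddCommGroup V] [InnerProductSpace ℝ V] [FiniteDimensional ℝ V]
    (L : V →ₗ[ℝ] V)
    (hLsymm : ∀ x y : V, ⟪L x, y⟫ = ⟪x, L y⟫)
    (hLpos : ∀ x : V, 0 ≤ ⟪x, L x⟫)
    (G : V → ℝ) (gradG : V → V)
    (hG : ∀ x, HasGradientAt G (gradG x) x)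
    (ℓ : ℝ≥0) (hℓ : 0 < ℓ)
    (hLip : LipschitzWith ℓ gradG)
    (κ : ℝ) (hκ : 2 * (ℓ : ℝ) ≤ κ)
    (E : V → ℝ) (hE : ∀ v, E v = (1/2) * ⟪v, L v⟫ + G v)
    (Lκ : V → V) (hLκ : ∀ v, Lκ v = L v + κ • v)
    (gκ : V → V) (hgκ : ∀ v, gκ v = -gradG v + κ • v)
    (τ : ℝ) (hτ : 0 < τ)
    (s : ℕ) (hs : 1 ≤ s)
    (U : ℕ → V)
    (D : ℕ → ℕ → V →ₗ[ℝ] V)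
    (hscheme : ∀ k, 1 ≤ k → k ≤ s →
      ∑ l ∈ Finset.Icc 1 k, D k l (U (l + 1) - U l)
        = τ • gκ (U k) - (τ / 2) • Lκ (U (k + 1) + U k)) :
    (∀ j, 1 ≤ j → j ≤ s →
      E (U (j + 1)) - E (U 1)
        ≤ -(1 / τ) * ∑ k ∈ Finset.Icc 1 j,
            ⟪U (k + 1) - U k, ∑ l ∈ Finset.Icc 1 k, D k l (U (l + 1) - U l)⟫)
    ∧ ((∀ v : ℕ → V,
          0 ≤ ∑ k ∈ Finset.Icc 1 s, ⟪v k, ∑ l ∈ Finset.Icc 1 k, D k l (v l)⟫) →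
        E (U (s + 1)) ≤ E (U 1)) := by
  have hdesc : ∀ x y : V, G y - G x ≤ ⟪gradG x, y - x⟫ + (ℓ : ℝ) * ‖y - x‖ ^ 2 :=
    stmt_0_descent G gradG hG ℓ hLip
  have hstep : ∀ k, 1 ≤ k → k ≤ s →
      E (U (k + 1)) - E (U k)
        ≤ -(1 / τ) * ⟪U (k + 1) - U k, ∑ l ∈ Finset.Icc 1 k, D k l (U (l + 1) - U l)⟫ := by
    intro k hk1 hk2
    exact stmt_0_perstep L hLsymm G gradG ℓ hdesc κ hκ E hE Lκ hLκ gκ hgκ τ hτ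
      (U k) (U (k + 1)) _ (hscheme k hk1 hk2)
  have part1 : ∀ j, 1 ≤ j → j ≤ s →
      E (U (j + 1)) - E (U 1)
        ≤ -(1 / τ) * ∑ k ∈ Finset.Icc 1 j,
            ⟪U (k + 1) - U k, ∑ l ∈ Finset.Icc 1 k, D k l (U (l + 1) - U l)⟫ := by
    intro j hj1 hjs
    induction j, hj1 using Nat.le_induction with
    | base =>
        have := hstep 1 le_rfl hjs
        simpa using this
    | succ n hn ih =>
        have hns : n ≤ s := le_trans (Nat.le_succ n) hjs
        have ih' := ih hns
        have hstepn := hstep (n + 1) (by omega) hjs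
        rw [Finset.sum_Icc_succ_top (by omega : 1 ≤ n + 1)]
        have : E (U (n + 1 + 1)) - E (U 1)
            = (E (U (n + 1 + 1)) - E (U (n + 1))) + (E (U (n + 1)) - E (U 1)) := by ring
        rw [this, neg_mul, mul_add, neg_add]
        have h2 : -(1 / τ) * ⟪U (n + 1 + 1) - U (n + 1),
            ∑ l ∈ Finset.Icc 1 (n + 1), D (n + 1) l (U (l + 1) - U l)⟫
            = -(1 / τ * ⟪U (n + 1 + 1) - U (n + 1),
                ∑ l ∈ Finset.Icc 1 (n + 1), D (n + 1) l (U (l + 1) - U l)⟫) := by ring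
        have h3 : -(1 / τ) * ∑ k ∈ Finset.Icc 1 n,
            ⟪U (k + 1) - U k, ∑ l ∈ Finset.Icc 1 k, D k l (U (l + 1) - U l)⟫
            = -(1 / τ * ∑ k ∈ Finset.Icc 1 n,
                ⟪U (k + 1) - U k, ∑ l ∈ Finset.Icc 1 k, D k l (U (l + 1) - U l)⟫) := by ring
        rw [h2] at hstepn
        rw [h3] at ih'
        linarith
  refine ⟨part1, fun hpos => ?_⟩
  have h1 := part1 s hs le_rfl
  have h0 : 0 ≤ ∑ k ∈ Finset.Icc 1 s,
      ⟪U (k + 1) - U k, ∑ l ∈ Finset.Icc 1 k, D k l (U (l + 1) - U l)⟫ :=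
    hpos (fun k => U (k + 1) - U k)
  have h2 : -(1 / τ) * ∑ k ∈ Finset.Icc 1 s,
      ⟪U (k + 1) - U k, ∑ l ∈ Finset.Icc 1 k, D k l (U (l + 1) - U l)⟫ ≤ 0 := by
    apply mul_nonpos_of_nonpos_of_nonneg _ h0
    have : 0 < 1 / τ := by positivity
    linarith
  linarith
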